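/- Let μ ∈ 𝒫_p(ℝ) be atomless with median 0, let ε ∈ (0,1/2), I_ε := [X_μ(ε), X_μ(1−ε)], and C_ε μ := (1−2ε)^{-1} μ|_{I_ε}. Then for every 1 ≤ q ≤ p, diam(I_ε)^{p−q} · W_q(μ, C_ε μ)^q ≤ 2^p ∫_{I_ε^c} |x|^p dμ(x). -/

import Mathlib

open Set MeasureTheory
open scoped ENNReal NNReal

open Filter
open scoped Topology

/-- Quantile function of a probability measure on `ℝ`. -/
noncomputable def quantile (μ : Measure ℝ) (z : ℝ) : ℝ :=
  sInf {a : ℝ | z < (μ (Iio a)).toReal}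

namespace QAux

variable (μ : Measure ℝ) [IsProbabilityMeasure μ]

lemma mem_qset_iff {z x : ℝ} (hz : 0 ≤ z) :
    x ∈ {a : ℝ | z < (μ (Iio a)).toReal} ↔ ENNReal.ofReal z < μ (Iio x) := by
  simp only [mem_setOf_eq]
  rw [ENNReal.ofReal_lt_iff_lt_toReal hz (measure_ne_top μ _)]

lemma qset_nonempty {z : ℝ} (hz0 : 0 ≤ z) (hz1 : z < 1) :
    {a : ℝ | z < (μ (Iio a)).toReal}.Nonempty := by
  have h := tendsto_measure_Iic_atTop (μ := μ)
  rw [measure_univ] at h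
  have hz' : ENNReal.ofReal z < 1 := ENNReal.ofReal_lt_one.2 hz1
  obtain ⟨x, hx⟩ := (h.eventually (eventually_gt_nhds hz')).exists
  refine ⟨x + 1, (mem_qset_iff μ hz0).2 ?_⟩
  exact hx.trans_le (measure_mono fun y hy => lt_of_le_of_lt hy (lt_add_one x))

lemma qset_bddBelow {z : ℝ} (hz0 : 0 < z) :
    BddBelow {a : ℝ | z < (μ (Iio a)).toReal} := by
  have h0 : Tendsto (fun n : ℕ => μ (Iic (-(n : ℝ)))) atTop
      (𝓝 (μ (⋂ n : ℕ, Iic (-(n : ℝ))))) := by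
    exact tendsto_measure_iInter_atTop (fun n => measurableSet_Iic.nullMeasurableSet)
      (fun m n hmn => Iic_subset_Iic.2 (by exact_mod_cast neg_le_neg (Nat.cast_le.2 hmn)))
      ⟨0, measure_ne_top μ _⟩
  have hempty : (⋂ n : ℕ, Iic (-(n : ℝ))) = ∅ := by
    ext x
    simp only [mem_iInter, mem_Iic, mem_empty_iff_false, iff_false, not_forall, not_le]
    obtain ⟨n, hn⟩ := exists_nat_gt (-x)
    exact ⟨n, by linarith⟩
  rw [hempty, measure_empty] at h0
  have hz' : (0 : ℝ≥0∞) < ENNReal.ofReal z := ENNReal.ofReal_pos.2 hz0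
  obtain ⟨n, hn⟩ := (h0.eventually (eventually_lt_nhds hz')).exists
  refine ⟨-(n : ℝ), fun s hs => ?_⟩
  by_contra hcon
  push_neg at hcon
  have h1 : μ (Iio s) ≤ μ (Iic (-(n : ℝ))) :=
    measure_mono fun y hy => le_of_lt (lt_trans hy hcon)
  have h2 : ENNReal.ofReal z < μ (Iio s) := (mem_qset_iff μ hz0.le).1 hs
  exact absurd (h2.trans_le h1) (not_lt.2 hn.le)

variable [NullSingletonClass μ]

lemma measure_Iic_quantile {z : ℝ} (hz0 : 0 < z) (hz1 : z < 1) :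
    μ (Iic (quantile μ z)) = ENNReal.ofReal z := by
  set S := {a : ℝ | z < (μ (Iio a)).toReal} with hS
  have hne := qset_nonempty μ hz0.le hz1
  have hbdd := qset_bddBelow μ hz0
  set b := quantile μ z with hb
  have hIioIic : μ (Iio b) = μ (Iic b) := measure_congr Iio_ae_eq_Iic
  have hsinf : sInf {a : ℝ | z < (μ (Iio a)).toReal} = b := rfl
  -- lower bound
  have hlow : ENNReal.ofReal z ≤ μ (Iic b) := by
    have h0 : Tendsto (fun n : ℕ => μ (Iio (b + 1 / ((n : ℝ) + 1)))) atTop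
        (𝓝 (μ (⋂ n : ℕ, Iio (b + 1 / ((n : ℝ) + 1))))) := by
      refine tendsto_measure_iInter_atTop (fun n => measurableSet_Iio.nullMeasurableSet)
        (fun m n hmn => Iio_subset_Iio ?_) ⟨0, measure_ne_top μ _⟩
      have h1 : (0:ℝ) < (m : ℝ) + 1 := by positivity
      have h2 : (m : ℝ) + 1 ≤ (n : ℝ) + 1 := by exact_mod_cast Nat.succ_le_succ hmn
      have := one_div_le_one_div_of_le h1 h2
      linarith
    have hInter : (⋂ n : ℕ, Iio (b + 1 / ((n : ℝ) + 1))) = Iic b := by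
      ext x
      simp only [mem_iInter, mem_Iio, mem_Iic]
      constructor
      · intro h
        by_contra hx
        push_neg at hx
        obtain ⟨n, hn⟩ := exists_nat_one_div_lt (sub_pos.2 hx)
        have := h n
        linarith
      · intro hx n
        have : (0:ℝ) < 1 / ((n : ℝ) + 1) := by positivity
        linarith
    rw [hInter] at h0
    refine ge_of_tendsto h0 (Eventually.of_forall fun n => ?_)
    have hpos : (0:ℝ) < 1 / ((n : ℝ) + 1) := by positivity
    obtain ⟨s, hsS, hs⟩ := exists_lt_of_csInf_lt hne (show sInf {a : ℝ | z < (μ (Iio a)).toReal} < b + 1 / ((n : ℝ) + 1) by rw [hsinf]; linarith)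
    have := (mem_qset_iff μ hz0.le).1 hsS
    exact le_of_lt (this.trans_le (measure_mono (Iio_subset_Iio hs.le)))
  -- upper bound
  have hupp : μ (Iio b) ≤ ENNReal.ofReal z := by
    have h0 : Tendsto (fun n : ℕ => μ (Iio (b - 1 / ((n : ℝ) + 1)))) atTop
        (𝓝 (μ (⋃ n : ℕ, Iio (b - 1 / ((n : ℝ) + 1))))) := by
      refine tendsto_measure_iUnion_atTop (fun m n hmn => Iio_subset_Iio ?_)
      have h1 : (0:ℝ) < (m : ℝ) + 1 := by positivity
      have h2 : (m : ℝ) + 1 ≤ (n : ℝ) + 1 := by exact_mod_cast Nat.succ_le_succ hmn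
      have := one_div_le_one_div_of_le h1 h2
      linarith
    have hUnion : (⋃ n : ℕ, Iio (b - 1 / ((n : ℝ) + 1))) = Iio b := by
      ext x
      simp only [mem_iUnion, mem_Iio]
      constructor
      · rintro ⟨n, hn⟩
        have : (0:ℝ) < 1 / ((n : ℝ) + 1) := by positivity
        linarith
      · intro hx
        obtain ⟨n, hn⟩ := exists_nat_one_div_lt (sub_pos.2 hx)
        exact ⟨n, by linarith⟩
    rw [hUnion] at h0
    refine le_of_tendsto h0 (Eventually.of_forall fun n => ?_)
    have hpos : (0:ℝ) < 1 / ((n : ℝ) + 1) := by positivity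
    have hnot : b - 1 / ((n : ℝ) + 1) ∉ S := by
      intro hmem
      have := csInf_le hbdd hmem
      rw [hsinf] at this
      linarith
    have hnot2 : ¬ ENNReal.ofReal z < μ (Iio (b - 1 / ((n : ℝ) + 1))) := by
      rw [← mem_qset_iff μ hz0.le]
      exact hnot
    exact not_lt.1 hnot2
  rw [← hIioIic] at hlow ⊢
  exact le_antisymm hupp hlow

lemma measure_Iio_quantile {z : ℝ} (hz0 : 0 < z) (hz1 : z < 1) :
    μ (Iio (quantile μ z)) = ENNReal.ofReal z := by
  rw [measure_congr (Iio_ae_eq_Iic (a := quantile μ z))]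
  exact measure_Iic_quantile μ hz0 hz1


lemma quantile_le_quantile (μ : Measure ℝ) [IsProbabilityMeasure μ] {z1 z2 : ℝ}
    (h1 : 0 < z1) (h12 : z1 ≤ z2) (h2 : z2 < 1) : quantile μ z1 ≤ quantile μ z2 := by
  refine csInf_le_csInf (qset_bddBelow μ h1) (qset_nonempty μ (h1.trans_le h12).le h2) ?_
  intro x hx
  exact lt_of_le_of_lt h12 hx

lemma key_ineq {p q D M c : ℝ} (hq : 1 ≤ q) (hqp : q ≤ p) (hM : 0 < M)
    (hD0 : 0 ≤ D) (hD : D ≤ 2 * M) (hc0 : 0 ≤ c) (hc : c ≤ M) :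
    D ^ (p - q) * c ^ q ≤ 2 ^ (p - 1) * M ^ p := by
  have h1 : D ^ (p - q) ≤ (2 * M) ^ (p - q) := Real.rpow_le_rpow hD0 hD (by linarith)
  have h2 : c ^ q ≤ M ^ q := Real.rpow_le_rpow hc0 hc (by linarith)
  calc D ^ (p - q) * c ^ q ≤ (2 * M) ^ (p - q) * M ^ q :=
        mul_le_mul h1 h2 (Real.rpow_nonneg hc0 q) (Real.rpow_nonneg (by positivity) _)
    _ = 2 ^ (p - q) * (M ^ (p - q) * M ^ q) := by
        rw [Real.mul_rpow (by norm_num) hM.le]; ring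
    _ = 2 ^ (p - q) * M ^ p := by rw [← Real.rpow_add hM, sub_add_cancel]
    _ ≤ 2 ^ (p - 1) * M ^ p :=
        mul_le_mul_of_nonneg_right
          (Real.rpow_le_rpow_of_exponent_le one_le_two (by linarith))
          (Real.rpow_nonneg hM.le p)

lemma max_rpow_le {u v pp : ℝ} (hu : 0 ≤ u) (hv : 0 ≤ v) :
    max u v ^ pp ≤ u ^ pp + v ^ pp := by
  rcases le_total u v with h | h
  · rw [max_eq_right h]; exact le_add_of_nonneg_left (Real.rpow_nonneg hu _)
  · rw [max_eq_left h]; exact le_add_of_nonneg_right (Real.rpow_nonneg hv _)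

end QAux

/-- The `q`-Wasserstein transport cost `W_q(μ,ν)^q`. -/
noncomputable def WpCost (p : ℝ) (μ ν : Measure ℝ) : ℝ≥0∞ :=
  sInf {c | ∃ π : Measure (ℝ × ℝ), IsProbabilityMeasure π ∧
    π.map Prod.fst = μ ∧ π.map Prod.snd = ν ∧
    c = ∫⁻ q, ENNReal.ofReal (|q.1 - q.2| ^ p) ∂π}

/-- The compactification `C_ε μ = (1-2ε)⁻¹ μ|_{I_ε}`. -/
noncomputable def compactify (ε : ℝ) (μ : Measure ℝ) : Measure ℝ :=
  (ENNReal.ofReal (1 - 2 * ε))⁻¹ • μ.restrict (Icc (quantile μ ε) (quantile μ (1 - ε)))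

/-- For an atomless `μ ∈ 𝒫_p(ℝ)` with median `0`, `ε ∈ (0,1/2)` and
`1 ≤ q ≤ p`, one has `diam(I_ε)^{p-q} W_q(μ, C_ε μ)^q ≤ 2^p ∫_{I_ε^c} |x|^p dμ`. -/
theorem compactification_error_q (p q ε : ℝ) (hq : 1 ≤ q) (hqp : q ≤ p)
    (hε : ε ∈ Ioo (0:ℝ) (1/2))
    (μ : Measure ℝ) [IsProbabilityMeasure μ] [NullSingletonClass μ]
    (hmed : quantile μ (1/2) = 0)
    (hmom : (∫⁻ x, ENNReal.ofReal (|x| ^ p) ∂μ) < ⊤) :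
    ENNReal.ofReal ((Metric.diam (Icc (quantile μ ε) (quantile μ (1 - ε)))) ^ (p - q))
        * WpCost q μ (compactify ε μ)
      ≤ ENNReal.ofReal ((2:ℝ) ^ p)
        * ∫⁻ x in (Icc (quantile μ ε) (quantile μ (1 - ε)))ᶜ, ENNReal.ofReal (|x| ^ p) ∂μ := by
  obtain ⟨hε0, hε12⟩ := hε
  have hq0 : (0:ℝ) < q := by linarith
  have hp0 : (0:ℝ) ≤ p := by linarith
  set a := quantile μ ε with ha_def
  set b := quantile μ (1 - ε) with hb_def
  have ha0 : a ≤ 0 := by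
    rw [ha_def, ← hmed]
    exact QAux.quantile_le_quantile μ hε0 (by linarith) (by norm_num)
  have hb0 : 0 ≤ b := by
    rw [hb_def, ← hmed]
    exact QAux.quantile_le_quantile μ (by norm_num) (by linarith) (by linarith)
  have hab : a ≤ b := ha0.trans hb0
  -- measure computations
  have hIioa : μ (Iio a) = ENNReal.ofReal ε := QAux.measure_Iio_quantile μ hε0 (by linarith)
  have hIicb : μ (Iic b) = ENNReal.ofReal (1 - ε) :=
    QAux.measure_Iic_quantile μ (by linarith) (by linarith)
  have hIic0 : μ (Iic 0) = ENNReal.ofReal (1/2) := by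
    rw [← hmed]; exact QAux.measure_Iic_quantile μ (by norm_num) (by norm_num)
  have hIccA0 : μ (Icc a 0) = ENNReal.ofReal (1/2 - ε) := by
    have hd1 : Disjoint (Iio a) (Icc a 0) := by
      rw [Set.disjoint_left]; intro x hx hx2; exact absurd hx2.1 (not_le.2 hx)
    have h1 := measure_union (μ := μ) hd1 (measurableSet_Icc (a := a) (b := (0:ℝ)))
    rw [Iio_union_Icc_eq_Iic ha0, hIic0, hIioa] at h1
    have h2 : ENNReal.ofReal (1/2 : ℝ) = ENNReal.ofReal ε + ENNReal.ofReal (1/2 - ε) := by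
      rw [← ENNReal.ofReal_add hε0.le (by linarith)]; norm_num
    rw [h2] at h1
    exact ((ENNReal.add_right_inj ENNReal.ofReal_ne_top).1 h1).symm
  have hIoc0b : μ (Ioc 0 b) = ENNReal.ofReal (1/2 - ε) := by
    have hd1 : Disjoint (Iic (0:ℝ)) (Ioc 0 b) := by
      rw [Set.disjoint_left]; intro x hx hx2; exact absurd hx2.1 (not_lt.2 hx)
    have h1 := measure_union (μ := μ) hd1 (measurableSet_Ioc (a := (0:ℝ)) (b := b))
    rw [Iic_union_Ioc_eq_Iic hb0, hIicb, hIic0] at h1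
    have h2 : ENNReal.ofReal (1 - ε) = ENNReal.ofReal (1/2 : ℝ) + ENNReal.ofReal (1/2 - ε) := by
      rw [← ENNReal.ofReal_add (by norm_num) (by linarith)]; congr 1; ring
    rw [h2] at h1
    exact ((ENNReal.add_right_inj ENNReal.ofReal_ne_top).1 h1).symm
  have hIccab : μ (Icc a b) = ENNReal.ofReal (1 - 2*ε) := by
    have hd1 : Disjoint (Iio a) (Icc a b) := by
      rw [Set.disjoint_left]; intro x hx hx2; exact absurd hx2.1 (not_le.2 hx)
    have h1 := measure_union (μ := μ) hd1 (measurableSet_Icc (a := a) (b := b))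
    rw [Iio_union_Icc_eq_Iic hab, hIicb, hIioa] at h1
    have h2 : ENNReal.ofReal (1 - ε) = ENNReal.ofReal ε + ENNReal.ofReal (1 - 2*ε) := by
      rw [← ENNReal.ofReal_add hε0.le (by linarith)]; congr 1; ring
    rw [h2] at h1
    exact ((ENNReal.add_right_inj ENNReal.ofReal_ne_top).1 h1).symm
  have hIoib : μ (Ioi b) = ENNReal.ofReal ε := by
    have hd1 : Disjoint (Iic b) (Ioi b) := by
      rw [Set.disjoint_left]; intro x hx hx2
      exact absurd (mem_Ioi.1 hx2) (not_lt.2 (mem_Iic.1 hx))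
    have h1 := measure_union (μ := μ) hd1 (measurableSet_Ioi (a := b))
    rw [Iic_union_Ioi, measure_univ, hIicb] at h1
    have h2 : (1 : ℝ≥0∞) = ENNReal.ofReal (1 - ε) + ENNReal.ofReal ε := by
      rw [← ENNReal.ofReal_add (by linarith) hε0.le, show 1 - ε + ε = 1 by ring,
        ENNReal.ofReal_one]
    rw [h2] at h1
    exact ((ENNReal.add_right_inj ENNReal.ofReal_ne_top).1 h1).symm
  -- the coupling
  set u : ℝ≥0∞ := ENNReal.ofReal (1/2 - ε) with hu_def
  have hu0 : u ≠ 0 := by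
    rw [hu_def, Ne, ENNReal.ofReal_eq_zero, not_le]; linarith
  have hu_top : u ≠ ⊤ := ENNReal.ofReal_ne_top
  set νL : Measure ℝ := u⁻¹ • μ.restrict (Icc a 0) with hnuL_def
  set νR : Measure ℝ := u⁻¹ • μ.restrict (Ioc 0 b) with hnuR_def
  have hνL_univ : νL univ = 1 := by
    rw [hnuL_def, Measure.smul_apply, Measure.restrict_apply_univ, hIccA0, smul_eq_mul,
      ENNReal.inv_mul_cancel hu0 hu_top]
  have hνR_univ : νR univ = 1 := by
    rw [hnuR_def, Measure.smul_apply, Measure.restrict_apply_univ, hIoc0b, smul_eq_mul,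
      ENNReal.inv_mul_cancel hu0 hu_top]
  haveI hνLP : IsProbabilityMeasure νL := ⟨hνL_univ⟩
  haveI hνRP : IsProbabilityMeasure νR := ⟨hνR_univ⟩
  have hdiag : Measurable fun x : ℝ => (x, x) := measurable_id.prodMk measurable_id
  set πm : Measure (ℝ × ℝ) := (μ.restrict (Icc a b)).map (fun x => (x, x))
      + (μ.restrict (Iio a)).prod νL + (μ.restrict (Ioi b)).prod νR with hpi_def
  have hmass_diag : ((μ.restrict (Icc a b)).map (fun x => (x, x))) univ
      = ENNReal.ofReal (1 - 2*ε) := by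
    rw [Measure.map_apply hdiag MeasurableSet.univ, preimage_univ, Measure.restrict_apply_univ,
      hIccab]
  have hmass_L : ((μ.restrict (Iio a)).prod νL) univ = ENNReal.ofReal ε := by
    rw [← univ_prod_univ, Measure.prod_prod, Measure.restrict_apply_univ, hIioa, hνL_univ,
      mul_one]
  have hmass_R : ((μ.restrict (Ioi b)).prod νR) univ = ENNReal.ofReal ε := by
    rw [← univ_prod_univ, Measure.prod_prod, Measure.restrict_apply_univ, hIoib, hνR_univ,
      mul_one]
  haveI hπP : IsProbabilityMeasure πm := by
    constructor
    rw [hpi_def, Measure.add_apply, Measure.add_apply, hmass_diag, hmass_L, hmass_R,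
      ← ENNReal.ofReal_add (by linarith) hε0.le, ← ENNReal.ofReal_add (by linarith) hε0.le,
      show 1 - 2*ε + ε + ε = 1 by ring, ENNReal.ofReal_one]
  -- first marginal
  have hfst : πm.map Prod.fst = μ := by
    rw [hpi_def, Measure.map_add _ _ measurable_fst, Measure.map_add _ _ measurable_fst,
      Measure.map_map measurable_fst hdiag,
      show (Prod.fst ∘ fun x : ℝ => (x, x)) = id from rfl, Measure.map_id,
      Measure.map_fst_prod, Measure.map_fst_prod, hνL_univ, hνR_univ, one_smul, one_smul]
    have hd1 : Disjoint (Icc a b) (Iio a) := by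
      rw [Set.disjoint_left]; intro x hx hx2; exact absurd hx.1 (not_le.2 hx2)
    have h1 : μ.restrict (Icc a b) + μ.restrict (Iio a) = μ.restrict (Iic b) := by
      rw [← Measure.restrict_union hd1 measurableSet_Iio, union_comm,
        Iio_union_Icc_eq_Iic hab]
    rw [h1]
    have hd2 : Disjoint (Iic b) (Ioi b) := by
      rw [Set.disjoint_left]; intro x hx hx2
      exact absurd (mem_Ioi.1 hx2) (not_lt.2 (mem_Iic.1 hx))
    rw [← Measure.restrict_union hd2 measurableSet_Ioi, Iic_union_Ioi,
      Measure.restrict_univ]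
  -- second marginal
  have hsnd : πm.map Prod.snd = compactify ε μ := by
    rw [hpi_def, Measure.map_add _ _ measurable_snd, Measure.map_add _ _ measurable_snd,
      Measure.map_map measurable_snd hdiag,
      show (Prod.snd ∘ fun x : ℝ => (x, x)) = id from rfl, Measure.map_id,
      Measure.map_snd_prod, Measure.map_snd_prod, Measure.restrict_apply_univ,
      Measure.restrict_apply_univ, hIioa, hIoib, hnuL_def, hnuR_def, smul_smul, smul_smul]
    set c : ℝ≥0∞ := ENNReal.ofReal ε * u⁻¹ with hc_def
    have hdisj0 : Disjoint (Icc a (0:ℝ)) (Ioc 0 b) := by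
      rw [Set.disjoint_left]; intro x hx hx2; exact absurd hx2.1 (not_lt.2 hx.2)
    have hrs : μ.restrict (Icc a 0) + μ.restrict (Ioc 0 b) = μ.restrict (Icc a b) := by
      rw [← Measure.restrict_union hdisj0 measurableSet_Ioc, Icc_union_Ioc_eq_Icc ha0 hb0]
    have hv2u : ENNReal.ofReal (1 - 2*ε) = 2 * u := by
      rw [hu_def, show (2:ℝ≥0∞) = ENNReal.ofReal 2 by simp,
        ← ENNReal.ofReal_mul (by norm_num)]
      congr 1; ring
    have key : (1 : ℝ≥0∞) + c = (ENNReal.ofReal (1 - 2*ε))⁻¹ := by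
      refine ENNReal.eq_inv_of_mul_eq_one_left ?_
      rw [add_mul, one_mul, hc_def, hv2u]
      have hre : ENNReal.ofReal ε * u⁻¹ * (2 * u) = 2 * ENNReal.ofReal ε * (u⁻¹ * u) := by
        ring
      rw [hre, ENNReal.inv_mul_cancel hu0 hu_top, mul_one, hu_def,
        show (2:ℝ≥0∞) = ENNReal.ofReal 2 by simp, ← ENNReal.ofReal_mul (by norm_num),
        ← ENNReal.ofReal_mul (by norm_num), ← ENNReal.ofReal_add (by linarith) (by linarith),
        show 2*(1/2 - ε) + 2*ε = 1 by ring, ENNReal.ofReal_one]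
    have hcomp : compactify ε μ = (ENNReal.ofReal (1 - 2*ε))⁻¹ • μ.restrict (Icc a b) := by
      rw [compactify, ← ha_def, ← hb_def]
    rw [hcomp, ← key, add_smul, one_smul, add_assoc, ← smul_add, hrs]
  -- the cost function
  set f : ℝ × ℝ → ℝ≥0∞ := fun z => ENNReal.ofReal (|z.1 - z.2| ^ q) with hf_def
  have hf : Measurable f :=
    (((Real.continuous_rpow_const hq0.le).comp
      ((continuous_fst.sub continuous_snd).abs)).measurable).ennreal_ofReal
  have hW : WpCost q μ (compactify ε μ) ≤ ∫⁻ z, f z ∂πm :=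
    sInf_le ⟨πm, hπP, hfst, hsnd, rfl⟩
  have hcost : ∫⁻ z, f z ∂πm = ∫⁻ z, f z ∂((μ.restrict (Iio a)).prod νL)
      + ∫⁻ z, f z ∂((μ.restrict (Ioi b)).prod νR) := by
    rw [hpi_def, lintegral_add_measure, lintegral_add_measure]
    have h0 : ∫⁻ z, f z ∂((μ.restrict (Icc a b)).map (fun x => (x, x))) = 0 := by
      rw [lintegral_map hf hdiag]
      simp [hf_def, Real.zero_rpow (ne_of_gt hq0)]
    rw [h0, zero_add]
  set JL := ∫⁻ x in Iio a, ENNReal.ofReal (|x| ^ p) ∂μ with hJL_def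
  set JR := ∫⁻ x in Ioi b, ENNReal.ofReal (|x| ^ p) ∂μ with hJR_def
  set D := b - a with hD_def
  have hD0 : 0 ≤ D := by rw [hD_def]; linarith
  have hmeasp : Measurable fun x : ℝ => ENNReal.ofReal (|x| ^ p) :=
    (((Real.continuous_rpow_const hp0).comp continuous_abs).measurable).ennreal_ofReal
  -- tail bounds
  have htailR : ENNReal.ofReal (b ^ p) * ENNReal.ofReal ε ≤ JR := by
    have h1 : ∫⁻ x in Ioi b, ENNReal.ofReal (b ^ p) ∂μ ≤ JR := by
      refine setLIntegral_mono hmeasp fun x hx => ?_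
      exact ENNReal.ofReal_le_ofReal
        (Real.rpow_le_rpow hb0 (le_trans (le_of_lt hx) (le_abs_self x)) hp0)
    rwa [setLIntegral_const, hIoib] at h1
  have htailL : ENNReal.ofReal ((-a) ^ p) * ENNReal.ofReal ε ≤ JL := by
    have h1 : ∫⁻ x in Iio a, ENNReal.ofReal ((-a) ^ p) ∂μ ≤ JL := by
      refine setLIntegral_mono hmeasp fun x hx => ?_
      refine ENNReal.ofReal_le_ofReal
        (Real.rpow_le_rpow (neg_nonneg.2 ha0) (le_trans (by have := mem_Iio.1 hx; linarith) (neg_le_abs x)) hp0)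
    rwa [setLIntegral_const, hIioa] at h1
  -- claim L
  have hmeasL : Measurable fun x : ℝ => ENNReal.ofReal (2 ^ (p-1) * (b ^ p + |x| ^ p)) :=
    ((continuous_const.mul (continuous_const.add
      ((Real.continuous_rpow_const hp0).comp continuous_abs))).measurable).ennreal_ofReal
  have hmeas_addL : Measurable fun x : ℝ => ENNReal.ofReal (b ^ p + |x| ^ p) :=
    ((continuous_const.add
      ((Real.continuous_rpow_const hp0).comp continuous_abs)).measurable).ennreal_ofReal
  have haeL : ∀ᵐ z ∂((μ.restrict (Iio a)).prod νL), z ∈ Iio a ×ˢ Icc a 0 := by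
    rw [ae_iff]
    have hAm : MeasurableSet (Iio a ×ˢ Icc a (0:ℝ)) := measurableSet_Iio.prod measurableSet_Icc
    have hAc : ((μ.restrict (Iio a)).prod νL) ((Iio a ×ˢ Icc a 0)ᶜ) = 0 := by
      rw [measure_compl hAm (measure_ne_top _ _), hmass_L, Measure.prod_prod,
        Measure.restrict_apply_self, hnuL_def, Measure.smul_apply,
        Measure.restrict_apply_self, hIccA0, smul_eq_mul,
        ENNReal.inv_mul_cancel hu0 hu_top, mul_one, hIioa, tsub_self]
    exact hAc
  have claimL : ENNReal.ofReal (D ^ (p - q)) * ∫⁻ z, f z ∂((μ.restrict (Iio a)).prod νL)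
      ≤ ENNReal.ofReal (2 ^ (p-1)) * (JR + JL) := by
    calc ENNReal.ofReal (D ^ (p - q)) * ∫⁻ z, f z ∂((μ.restrict (Iio a)).prod νL)
        = ∫⁻ z, ENNReal.ofReal (D ^ (p - q)) * f z ∂((μ.restrict (Iio a)).prod νL) :=
          (lintegral_const_mul _ hf).symm
      _ ≤ ∫⁻ z, ENNReal.ofReal (2 ^ (p-1) * (b ^ p + |z.1| ^ p))
            ∂((μ.restrict (Iio a)).prod νL) := by
          refine lintegral_mono_ae (haeL.mono fun z hz => ?_)
          obtain ⟨hz1, hz2⟩ := hz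
          rw [hf_def]
          simp only []
          rw [← ENNReal.ofReal_mul (Real.rpow_nonneg hD0 _)]
          apply ENNReal.ofReal_le_ofReal
          have hz1' : z.1 < a := hz1
          have hxneg : z.1 < 0 := lt_of_lt_of_le hz1' ha0
          have hM : 0 < max b (-z.1) := lt_of_lt_of_le (neg_pos.2 hxneg) (le_max_right _ _)
          have hDle : D ≤ 2 * max b (-z.1) := by
            have h1 : b ≤ max b (-z.1) := le_max_left _ _
            have h3 : -z.1 ≤ max b (-z.1) := le_max_right _ _
            rw [hD_def]; linarith
          have habs : |z.1 - z.2| ≤ max b (-z.1) := by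
            have h1 : a ≤ z.2 := hz2.1
            have h2 : z.2 ≤ 0 := hz2.2
            have h3 : -z.1 ≤ max b (-z.1) := le_max_right _ _
            rw [abs_of_nonpos (by linarith)]
            linarith
          calc D ^ (p - q) * |z.1 - z.2| ^ q ≤ 2 ^ (p-1) * (max b (-z.1)) ^ p :=
                QAux.key_ineq hq hqp hM hD0 hDle (abs_nonneg _) habs
            _ ≤ 2 ^ (p-1) * (b ^ p + |z.1| ^ p) := by
                have h1 : (max b (-z.1)) ^ p ≤ b ^ p + (-z.1) ^ p :=
                  QAux.max_rpow_le hb0 (by linarith)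
                rw [abs_of_neg hxneg]
                exact mul_le_mul_of_nonneg_left h1 (Real.rpow_nonneg (by norm_num) _)
      _ = ∫⁻ x, ENNReal.ofReal (2 ^ (p-1) * (b ^ p + |x| ^ p))
            ∂(((μ.restrict (Iio a)).prod νL).map Prod.fst) :=
          (lintegral_map hmeasL measurable_fst).symm
      _ = ∫⁻ x in Iio a, ENNReal.ofReal (2 ^ (p-1) * (b ^ p + |x| ^ p)) ∂μ := by
          rw [Measure.map_fst_prod, hνL_univ, one_smul]
      _ = ENNReal.ofReal (2 ^ (p-1)) * ∫⁻ x in Iio a, ENNReal.ofReal (b ^ p + |x| ^ p) ∂μ := by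
          simp_rw [ENNReal.ofReal_mul (Real.rpow_nonneg (by norm_num : (0:ℝ) ≤ 2) _)]
          rw [lintegral_const_mul _ hmeas_addL]
      _ = ENNReal.ofReal (2 ^ (p-1)) * (ENNReal.ofReal (b ^ p) * ENNReal.ofReal ε + JL) := by
          congr 1
          simp_rw [ENNReal.ofReal_add (Real.rpow_nonneg hb0 p)
            (Real.rpow_nonneg (abs_nonneg _) p)]
          rw [lintegral_add_left measurable_const, setLIntegral_const, hIioa]
      _ ≤ ENNReal.ofReal (2 ^ (p-1)) * (JR + JL) :=
          mul_le_mul_right (add_le_add_left htailR _) _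
  -- claim R
  have hmeasR : Measurable fun x : ℝ => ENNReal.ofReal (2 ^ (p-1) * ((-a) ^ p + |x| ^ p)) :=
    ((continuous_const.mul (continuous_const.add
      ((Real.continuous_rpow_const hp0).comp continuous_abs))).measurable).ennreal_ofReal
  have hmeas_addR : Measurable fun x : ℝ => ENNReal.ofReal ((-a) ^ p + |x| ^ p) :=
    ((continuous_const.add
      ((Real.continuous_rpow_const hp0).comp continuous_abs)).measurable).ennreal_ofReal
  have haeR : ∀ᵐ z ∂((μ.restrict (Ioi b)).prod νR), z ∈ Ioi b ×ˢ Ioc 0 b := by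
    rw [ae_iff]
    have hAm : MeasurableSet (Ioi b ×ˢ Ioc (0:ℝ) b) := measurableSet_Ioi.prod measurableSet_Ioc
    have hAc : ((μ.restrict (Ioi b)).prod νR) ((Ioi b ×ˢ Ioc 0 b)ᶜ) = 0 := by
      rw [measure_compl hAm (measure_ne_top _ _), hmass_R, Measure.prod_prod,
        Measure.restrict_apply_self, hnuR_def, Measure.smul_apply,
        Measure.restrict_apply_self, hIoc0b, smul_eq_mul,
        ENNReal.inv_mul_cancel hu0 hu_top, mul_one, hIoib, tsub_self]
    exact hAc
  have claimR : ENNReal.ofReal (D ^ (p - q)) * ∫⁻ z, f z ∂((μ.restrict (Ioi b)).prod νR)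
      ≤ ENNReal.ofReal (2 ^ (p-1)) * (JL + JR) := by
    calc ENNReal.ofReal (D ^ (p - q)) * ∫⁻ z, f z ∂((μ.restrict (Ioi b)).prod νR)
        = ∫⁻ z, ENNReal.ofReal (D ^ (p - q)) * f z ∂((μ.restrict (Ioi b)).prod νR) :=
          (lintegral_const_mul _ hf).symm
      _ ≤ ∫⁻ z, ENNReal.ofReal (2 ^ (p-1) * ((-a) ^ p + |z.1| ^ p))
            ∂((μ.restrict (Ioi b)).prod νR) := by
          refine lintegral_mono_ae (haeR.mono fun z hz => ?_)
          obtain ⟨hz1, hz2⟩ := hz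
          rw [hf_def]
          simp only []
          rw [← ENNReal.ofReal_mul (Real.rpow_nonneg hD0 _)]
          apply ENNReal.ofReal_le_ofReal
          have hz1' : b < z.1 := hz1
          have hxpos : 0 < z.1 := lt_of_le_of_lt hb0 hz1'
          have hM : 0 < max (-a) z.1 := lt_of_lt_of_le hxpos (le_max_right _ _)
          have hDle : D ≤ 2 * max (-a) z.1 := by
            have h1 : -a ≤ max (-a) z.1 := le_max_left _ _
            have h3 : z.1 ≤ max (-a) z.1 := le_max_right _ _
            rw [hD_def]; linarith
          have habs : |z.1 - z.2| ≤ max (-a) z.1 := by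
            have h1 : 0 < z.2 := hz2.1
            have h2 : z.2 ≤ b := hz2.2
            have h3 : z.1 ≤ max (-a) z.1 := le_max_right _ _
            rw [abs_of_nonneg (by linarith)]
            linarith
          calc D ^ (p - q) * |z.1 - z.2| ^ q ≤ 2 ^ (p-1) * (max (-a) z.1) ^ p :=
                QAux.key_ineq hq hqp hM hD0 hDle (abs_nonneg _) habs
            _ ≤ 2 ^ (p-1) * ((-a) ^ p + |z.1| ^ p) := by
                have h1 : (max (-a) z.1) ^ p ≤ (-a) ^ p + z.1 ^ p :=
                  QAux.max_rpow_le (neg_nonneg.2 ha0) hxpos.le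
                rw [abs_of_pos hxpos]
                exact mul_le_mul_of_nonneg_left h1 (Real.rpow_nonneg (by norm_num) _)
      _ = ∫⁻ x, ENNReal.ofReal (2 ^ (p-1) * ((-a) ^ p + |x| ^ p))
            ∂(((μ.restrict (Ioi b)).prod νR).map Prod.fst) :=
          (lintegral_map hmeasR measurable_fst).symm
      _ = ∫⁻ x in Ioi b, ENNReal.ofReal (2 ^ (p-1) * ((-a) ^ p + |x| ^ p)) ∂μ := by
          rw [Measure.map_fst_prod, hνR_univ, one_smul]
      _ = ENNReal.ofReal (2 ^ (p-1)) * ∫⁻ x in Ioi b, ENNReal.ofReal ((-a) ^ p + |x| ^ p) ∂μ := by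
          simp_rw [ENNReal.ofReal_mul (Real.rpow_nonneg (by norm_num : (0:ℝ) ≤ 2) _)]
          rw [lintegral_const_mul _ hmeas_addR]
      _ = ENNReal.ofReal (2 ^ (p-1)) * (ENNReal.ofReal ((-a) ^ p) * ENNReal.ofReal ε + JR) := by
          congr 1
          simp_rw [ENNReal.ofReal_add (Real.rpow_nonneg (neg_nonneg.2 ha0) p)
            (Real.rpow_nonneg (abs_nonneg _) p)]
          rw [lintegral_add_left measurable_const, setLIntegral_const, hIoib]
      _ ≤ ENNReal.ofReal (2 ^ (p-1)) * (JL + JR) :=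
          mul_le_mul_right (add_le_add_left htailL _) _
  -- conclusion
  have hdiam : Metric.diam (Icc a b) = D := by rw [hD_def]; exact Real.diam_Icc hab
  have hdisjLR : Disjoint (Iio a) (Ioi b) := by
    rw [Set.disjoint_left]; intro x hx hx2
    exact lt_asymm (hx.trans_le hab) hx2
  have h2p : (2:ℝ) ^ p = 2 * 2 ^ (p-1) := by
    have h := Real.rpow_add (by norm_num : (0:ℝ) < 2) 1 (p-1)
    rw [Real.rpow_one, show (1:ℝ) + (p-1) = p by ring] at h
    exact h
  calc ENNReal.ofReal (Metric.diam (Icc a b) ^ (p - q)) * WpCost q μ (compactify ε μ)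
      ≤ ENNReal.ofReal (D ^ (p - q)) * ∫⁻ z, f z ∂πm := by
        rw [hdiam]; exact mul_le_mul_right hW _
    _ = ENNReal.ofReal (D ^ (p - q)) * ∫⁻ z, f z ∂((μ.restrict (Iio a)).prod νL)
        + ENNReal.ofReal (D ^ (p - q)) * ∫⁻ z, f z ∂((μ.restrict (Ioi b)).prod νR) := by
        rw [hcost, mul_add]
    _ ≤ ENNReal.ofReal (2 ^ (p-1)) * (JR + JL) + ENNReal.ofReal (2 ^ (p-1)) * (JL + JR) :=
        add_le_add claimL claimR
    _ = ENNReal.ofReal ((2:ℝ) ^ p) * (JL + JR) := by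
        rw [add_comm JR JL, ← two_mul, ← mul_assoc]
        congr 1
        rw [show (2:ℝ≥0∞) = ENNReal.ofReal 2 by simp, ← ENNReal.ofReal_mul (by norm_num),
          ← h2p]
    _ = ENNReal.ofReal ((2:ℝ) ^ p) * ∫⁻ x in (Icc a b)ᶜ, ENNReal.ofReal (|x| ^ p) ∂μ := by
        have hcompl : (Icc a b)ᶜ = Iio a ∪ Ioi b := by
          ext x
          simp only [mem_compl_iff, mem_Icc, mem_union, mem_Iio, mem_Ioi, not_and_or, not_le]
        rw [hcompl, lintegral_union measurableSet_Ioi hdisjLR, hJL_def, hJR_def]
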